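/- Let t₁ < ⋯ < t_k be real numbers and f : [t₁, t_k] → ℝ a piecewise linear function that is affine on each interval [t_i, t_{i+1}], and let g be the greatest convex minorant of f on [t₁, t_k]. Then the vector of right-hand slopes of g at t₁, …, t_{k−1} equals the isotonic regression of the slopes s_i = [f(t_{i+1}) − f(t_i)] / [t_{i+1} − t_i] with weights t_{i+1} − t_i, i.e. it is the unique minimizer of Σ_{i=1}^{k−1} (t_{i+1} − t_i)(θ_i − s_i)² over all vectors (θ₁, …, θ_{k−1}) with θ₁ ≤ ⋯ ≤ θ_{k−1}. -/

import Mathlib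

/-- `g` is the greatest convex minorant of `f` on the set `I`. -/
def IsGCM (I : Set ℝ) (f g : ℝ → ℝ) : Prop :=
  ConvexOn ℝ I g ∧ (∀ x ∈ I, g x ≤ f x) ∧
    ∀ g' : ℝ → ℝ, ConvexOn ℝ I g' → (∀ x ∈ I, g' x ≤ f x) → ∀ x ∈ I, g' x ≤ g x

lemma affine_le_of_endpoints {a b c d x1 x2 x : ℝ}
    (h1 : a * x1 + b ≤ c * x1 + d) (h2 : a * x2 + b ≤ c * x2 + d)
    (hx1 : x1 ≤ x) (hx2 : x ≤ x2) : a * x + b ≤ c * x + d := by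
  rcases eq_or_lt_of_le (hx1.trans hx2) with h | h
  · have hx : x = x1 := le_antisymm (h ▸ hx2) hx1
    simpa [hx] using h1
  · nlinarith [mul_nonneg (sub_nonneg.2 hx2) (sub_nonneg.2 h1),
      mul_nonneg (sub_nonneg.2 hx1) (sub_nonneg.2 h2)]

lemma abel_sum (n : ℕ) (e c : ℕ → ℝ) :
    ∑ i ∈ Finset.range n, (e (i + 1) - e i) * c i
      = e n * c n - e 0 * c 0 - ∑ j ∈ Finset.range n, e (j + 1) * (c (j + 1) - c j) := by
  induction n with
  | zero => simp
  | succ n ih => rw [Finset.sum_range_succ, Finset.sum_range_succ, ih]; ring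

lemma convexOn_affine (s : Set ℝ) (hs : Convex ℝ s) (m c : ℝ) :
    ConvexOn ℝ s (fun x => m * x + c) := by
  refine ⟨hs, fun x _ y _ a b ha hb hab => ?_⟩
  simp only [smul_eq_mul]
  exact le_of_eq (by linear_combination (-c) * hab)

set_option maxHeartbeats 1000000 in
/-- The vector of right-hand slopes of the greatest convex minorant `g` of a piecewise linear
function `f` with knots `t 0 < ⋯ < t (k-1)`, taken at the knots `t 0, …, t (k-2)`, is the
isotonic regression of the slopes `s i = (f (t (i+1)) - f (t i)) / (t (i+1) - t i)` with weights
`t (i+1) - t i`: it is monotone, minimizes the weighted least-squares criterion over all monotone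
vectors, and is the unique such minimizer. -/
theorem gcm_slopes_eq_isotonic_regression (k : ℕ) (hk : 2 ≤ k)
    (t : ℕ → ℝ) (ht : ∀ i, i + 1 < k → t i < t (i + 1))
    (f g : ℝ → ℝ)
    (hf_piecewise : ∀ i, i + 1 < k → ∃ α β : ℝ,
      ∀ y ∈ Set.Icc (t i) (t (i + 1)), f y = α * y + β)
    (hGCM : IsGCM (Set.Icc (t 0) (t (k - 1))) f g)
    (θ : ℕ → ℝ)
    (hθ : ∀ i, i + 1 < k → HasDerivWithinAt g (θ i) (Set.Ici (t i)) (t i)) :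
    (∀ i j, i ≤ j → j + 1 < k → θ i ≤ θ j) ∧
    ∀ ξ : ℕ → ℝ, (∀ i j, i ≤ j → j + 1 < k → ξ i ≤ ξ j) →
      (∑ i ∈ Finset.range (k - 1),
          (t (i + 1) - t i) * (θ i - (f (t (i + 1)) - f (t i)) / (t (i + 1) - t i)) ^ 2
        ≤ ∑ i ∈ Finset.range (k - 1),
          (t (i + 1) - t i) * (ξ i - (f (t (i + 1)) - f (t i)) / (t (i + 1) - t i)) ^ 2) ∧
      ((∑ i ∈ Finset.range (k - 1),
          (t (i + 1) - t i) * (ξ i - (f (t (i + 1)) - f (t i)) / (t (i + 1) - t i)) ^ 2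
        = ∑ i ∈ Finset.range (k - 1),
          (t (i + 1) - t i) * (θ i - (f (t (i + 1)) - f (t i)) / (t (i + 1) - t i)) ^ 2) →
        ∀ i, i + 1 < k → ξ i = θ i) := by
  classical
  obtain ⟨hconv, hle, hmax⟩ := hGCM
  -- strict monotonicity of knots
  have tmono : ∀ j i, i < j → j < k → t i < t j := by
    intro j
    induction j with
    | zero => omega
    | succ j ih =>
      intro i hij hjk
      rcases lt_or_eq_of_le (Nat.lt_succ_iff.mp hij) with h | h
      · exact (ih i h (by omega)).trans (ht j hjk)
      · subst h; exact ht i hjk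
  have tmono' : ∀ i j, i ≤ j → j < k → t i ≤ t j := by
    intro i j hij hjk
    rcases lt_or_eq_of_le hij with h | h
    · exact (tmono j i h hjk).le
    · subst h; exact le_rfl
  have hI_mem : ∀ m, m < k → t m ∈ Set.Icc (t 0) (t (k - 1)) :=
    fun m hm => ⟨tmono' 0 m (Nat.zero_le m) hm, tmono' m (k - 1) (by omega) (by omega)⟩
  have hw : ∀ i, i + 1 < k → 0 < t (i + 1) - t i := fun i hik => sub_pos.2 (ht i hik)
  choose! α β hαβ using hf_piecewise
  -- locate any point of the interval in a piece
  have hpiece : ∀ x, x ∈ Set.Icc (t 0) (t (k - 1)) →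
      ∃ i, i + 1 < k ∧ t i ≤ x ∧ x ≤ t (i + 1) := by
    intro x hx
    have key : ∀ n, n + 1 < k → x ≤ t (n + 1) →
        ∃ i, i + 1 < k ∧ t i ≤ x ∧ x ≤ t (i + 1) := by
      intro n
      induction n with
      | zero => intro h hxn; exact ⟨0, h, hx.1, hxn⟩
      | succ n ih =>
        intro h hxn
        by_cases hc : t (n + 1) ≤ x
        · exact ⟨n + 1, h, hc, hxn⟩
        · exact ih (by omega) (le_of_lt (not_le.mp hc))
    have hkk : k - 2 + 1 = k - 1 := by omega
    have := key (k - 2) (by omega)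
    rw [hkk] at this
    exact this hx.2
  -- affine minorants at knots are minorants of f, hence of g
  have hbelowf : ∀ m c : ℝ, (∀ n, n < k → m * t n + c ≤ f (t n)) →
      ∀ x ∈ Set.Icc (t 0) (t (k - 1)), m * x + c ≤ f x := by
    intro m c hknot x hx
    obtain ⟨i, hik, hxi, hxi1⟩ := hpiece x hx
    have h1 := hknot i (by omega)
    have h2 := hknot (i + 1) hik
    rw [hαβ i hik (t i) ⟨le_rfl, (ht i hik).le⟩] at h1
    rw [hαβ i hik (t (i + 1)) ⟨(ht i hik).le, le_rfl⟩] at h2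
    rw [hαβ i hik x ⟨hxi, hxi1⟩]
    exact affine_le_of_endpoints h1 h2 hxi hxi1
  have hbelowg : ∀ m c : ℝ, (∀ n, n < k → m * t n + c ≤ f (t n)) →
      ∀ x ∈ Set.Icc (t 0) (t (k - 1)), m * x + c ≤ g x :=
    fun m c h => hmax _ (convexOn_affine _ (convex_Icc _ _) m c) (hbelowf m c h)
  -- g touches f at the endpoints
  have he0 : g (t 0) = f (t 0) := by
    have hne : (Finset.range (k - 1)).Nonempty := ⟨0, Finset.mem_range.2 (by omega)⟩
    set m0 := Finset.inf' (Finset.range (k - 1)) hne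
      (fun n => (f (t (n + 1)) - f (t 0)) / (t (n + 1) - t 0)) with hm0
    have hknot : ∀ n, n < k → m0 * t n + (f (t 0) - m0 * t 0) ≤ f (t n) := by
      intro n hn
      rcases Nat.eq_zero_or_pos n with rfl | hn0
      · exact le_of_eq (by ring)
      · obtain ⟨p, rfl⟩ : ∃ p, n = p + 1 := ⟨n - 1, by omega⟩
        have hmem : p ∈ Finset.range (k - 1) := Finset.mem_range.2 (by omega)
        have h := Finset.inf'_le (fun n => (f (t (n + 1)) - f (t 0)) / (t (n + 1) - t 0)) hmem
        rw [← hm0] at h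
        have hpos : 0 < t (p + 1) - t 0 := sub_pos.2 (tmono (p + 1) 0 (by omega) (by omega))
        rw [le_div_iff₀ hpos] at h
        nlinarith [h]
    have h1 := hbelowg m0 _ hknot (t 0) (hI_mem 0 (by omega))
    have h2 := hle (t 0) (hI_mem 0 (by omega))
    linarith
  have hek : g (t (k - 1)) = f (t (k - 1)) := by
    have hne : (Finset.range (k - 1)).Nonempty := ⟨0, Finset.mem_range.2 (by omega)⟩
    set m1 := Finset.sup' (Finset.range (k - 1)) hne
      (fun n => (f (t (k - 1)) - f (t n)) / (t (k - 1) - t n)) with hm1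
    have hknot : ∀ n, n < k → m1 * t n + (f (t (k - 1)) - m1 * t (k - 1)) ≤ f (t n) := by
      intro n hn
      rcases eq_or_lt_of_le (show n ≤ k - 1 by omega) with h | h
      · subst h; exact le_of_eq (by ring)
      · have hmem : n ∈ Finset.range (k - 1) := Finset.mem_range.2 h
        have hh := Finset.le_sup' (fun n => (f (t (k - 1)) - f (t n)) / (t (k - 1) - t n)) hmem
        rw [← hm1] at hh
        have hpos : 0 < t (k - 1) - t n := sub_pos.2 (tmono (k - 1) n h (by omega))
        rw [div_le_iff₀ hpos] at hh
        nlinarith [hh]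
    have h1 := hbelowg m1 _ hknot (t (k - 1)) (hI_mem (k - 1) (by omega))
    have h2 := hle (t (k - 1)) (hI_mem (k - 1) (by omega))
    linarith
  -- g is affine on each piece
  have haff : ∀ i, i + 1 < k → ∀ y ∈ Set.Icc (t i) (t (i + 1)),
      g y = g (t i) + (g (t (i + 1)) - g (t i)) / (t (i + 1) - t i) * (y - t i) := by
    intro i hik y hy
    have hw' := hw i hik
    set σ := (g (t (i + 1)) - g (t i)) / (t (i + 1) - t i) with hσdef
    have hσ : σ * (t (i + 1) - t i) = g (t (i + 1)) - g (t i) := div_mul_cancel₀ _ hw'.ne'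
    have hup : g y ≤ g (t i) + σ * (y - t i) := by
      rcases eq_or_lt_of_le hy.1 with h | h
      · rw [← h]; simp
      · set a := (t (i + 1) - y) / (t (i + 1) - t i) with hadef
        set b := (y - t i) / (t (i + 1) - t i) with hbdef
        have ha : 0 ≤ a := div_nonneg (by linarith [hy.2]) hw'.le
        have hb : 0 ≤ b := div_nonneg (by linarith) hw'.le
        have hab : a + b = 1 := by rw [hadef, hbdef]; field_simp; ring
        have hcomb : a • t i + b • t (i + 1) = y := by
          simp only [smul_eq_mul, hadef, hbdef]; field_simp; ring
        have h2 := hconv.2 (hI_mem i (by omega)) (hI_mem (i + 1) hik) ha hb hab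
        rw [hcomb] at h2
        simp only [smul_eq_mul] at h2
        have h3 : a * g (t i) + b * g (t (i + 1)) = g (t i) + σ * (y - t i) := by
          rw [hadef, hbdef, hσdef]; field_simp; ring
        linarith
    have hknot : ∀ n, n < k → σ * t n + (g (t i) - σ * t i) ≤ f (t n) := by
      intro n hn
      have hgle : σ * t n + (g (t i) - σ * t i) ≤ g (t n) := by
        rcases lt_trichotomy n i with h | h | h
        · have hs := hconv.slope_mono_adjacent (hI_mem n hn) (hI_mem (i + 1) hik)
            (tmono i n h (by omega)) (ht i hik)
          rw [← hσdef] at hs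
          have hpos : 0 < t i - t n := sub_pos.2 (tmono i n h (by omega))
          rw [div_le_iff₀ hpos] at hs
          nlinarith [hs]
        · subst h; exact le_of_eq (by ring)
        · rcases eq_or_lt_of_le (Nat.succ_le_of_lt h) with h' | h'
          · rw [← h']; exact le_of_eq (by linarith [hσ])
          · have hs := hconv.slope_mono_adjacent (hI_mem i (by omega)) (hI_mem n hn)
              (ht i hik) (tmono n (i + 1) h' (by omega))
            rw [← hσdef] at hs
            have hpos : 0 < t n - t (i + 1) := sub_pos.2 (tmono n (i + 1) h' (by omega))
            rw [le_div_iff₀ hpos] at hs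
            nlinarith [hs, hσ]
      exact hgle.trans (hle (t n) (hI_mem n hn))
    have hlow := hbelowg σ _ hknot y
      ⟨(hI_mem i (by omega)).1.trans hy.1, hy.2.trans (hI_mem (i + 1) hik).2⟩
    linarith
  -- the given right derivatives are the slopes of g on the pieces
  have hθσ : ∀ i, i + 1 < k → θ i = (g (t (i + 1)) - g (t i)) / (t (i + 1) - t i) := by
    intro i hik
    set σ := (g (t (i + 1)) - g (t i)) / (t (i + 1) - t i) with hσdef
    have hder : HasDerivWithinAt (fun x => g (t i) + σ * (x - t i)) σ (Set.Ici (t i)) (t i) := by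
      have : HasDerivAt (fun x => g (t i) + σ * (x - t i)) σ (t i) := by
        simpa using (((hasDerivAt_id (t i)).sub_const (t i)).const_mul σ).const_add (g (t i))
      exact this.hasDerivWithinAt
    have hev : g =ᶠ[nhdsWithin (t i) (Set.Ici (t i))] (fun x => g (t i) + σ * (x - t i)) :=
      Filter.eventuallyEq_of_mem (Icc_mem_nhdsGE (ht i hik))
        (fun y hy => haff i hik y hy)
    have hd : HasDerivWithinAt g σ (Set.Ici (t i)) (t i) :=
      hder.congr_of_eventuallyEq hev (by simp)
    exact (uniqueDiffOn_Ici (t i) (t i) Set.self_mem_Ici).eq_deriv _ (hθ i hik) hd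
  have hstep : ∀ i, i + 1 < k → g (t (i + 1)) = g (t i) + θ i * (t (i + 1) - t i) := by
    intro i hik
    have h1 := haff i hik (t (i + 1)) ⟨(ht i hik).le, le_rfl⟩
    rw [← hθσ i hik] at h1
    exact h1
  -- monotonicity of θ
  have hadj : ∀ i, i + 2 < k → θ i ≤ θ (i + 1) := by
    intro i h
    rw [hθσ i (by omega), hθσ (i + 1) (by omega)]
    exact hconv.slope_mono_adjacent (hI_mem i (by omega)) (hI_mem (i + 2) h)
      (ht i (by omega)) (ht (i + 1) (by omega))
  have hmono : ∀ j i, i ≤ j → j + 1 < k → θ i ≤ θ j := by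
    intro j
    induction j with
    | zero => intro i h _; rw [Nat.le_zero.mp h]
    | succ j ih =>
      intro i hij hjk
      rcases eq_or_lt_of_le hij with h | h
      · rw [h]
      · exact (ih i (by omega) (by omega)).trans (hadj j (by omega))
  refine ⟨fun i j hij hjk => hmono j i hij hjk, ?_⟩
  -- complementary slackness
  have hcs : ∀ j, j + 2 < k → g (t (j + 1)) < f (t (j + 1)) → θ (j + 1) ≤ θ j := by
    intro j' hjk hlt
    by_contra hcon
    push_neg at hcon
    set μ := (θ j' + θ (j' + 1)) / 2 with hμdef
    have hμ1 : 0 < θ (j' + 1) - μ := by rw [hμdef]; linarith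
    have hμ2 : 0 < μ - θ j' := by rw [hμdef]; linarith
    set δ := min (f (t (j' + 1)) - g (t (j' + 1)))
      (min ((θ (j' + 1) - μ) * (t (j' + 2) - t (j' + 1))) ((μ - θ j') * (t (j' + 1) - t j')))
      with hδdef
    have hδ : 0 < δ := by
      refine lt_min (by linarith) (lt_min ?_ ?_)
      · exact mul_pos hμ1 (hw (j' + 1) hjk)
      · exact mul_pos hμ2 (hw j' (by omega))
    have hup : ∀ n, j' + 1 + n < k →
        g (t (j' + 1)) + θ (j' + 1) * (t (j' + 1 + n) - t (j' + 1)) ≤ g (t (j' + 1 + n)) := by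
      intro n
      induction n with
      | zero => intro _; simp
      | succ n ih =>
        intro h
        have hs := hstep (j' + 1 + n) (by omega)
        have hm := hmono (j' + 1 + n) (j' + 1) (by omega) (by omega)
        have hw2 := hw (j' + 1 + n) (by omega)
        have hih := ih (by omega)
        have hp : θ (j' + 1) * (t (j' + 1 + n + 1) - t (j' + 1 + n))
            ≤ θ (j' + 1 + n) * (t (j' + 1 + n + 1) - t (j' + 1 + n)) :=
          mul_le_mul_of_nonneg_right hm hw2.le
        have hgoal : g (t (j' + 1)) + θ (j' + 1) * (t (j' + 1 + n + 1) - t (j' + 1))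
            ≤ g (t (j' + 1 + n + 1)) := by nlinarith [hp, hs, hih]
        exact hgoal
    have hdown : ∀ n, g (t (j' + 1)) - θ j' * (t (j' + 1) - t (j' - n)) ≤ g (t (j' - n)) := by
      intro n
      induction n with
      | zero =>
        have hs := hstep j' (by omega)
        simp only [Nat.sub_zero]
        nlinarith [hs]
      | succ n ih =>
        by_cases hn : n < j'
        · have hm1 : j' - (n + 1) + 1 = j' - n := by omega
          have hs := hstep (j' - (n + 1)) (by omega)
          rw [hm1] at hs
          have hmn := hmono j' (j' - (n + 1)) (by omega) (by omega)
          have hw2 := hw (j' - (n + 1)) (by omega)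
          rw [hm1] at hw2
          have hp : θ (j' - (n + 1)) * (t (j' - n) - t (j' - (n + 1)))
              ≤ θ j' * (t (j' - n) - t (j' - (n + 1))) :=
            mul_le_mul_of_nonneg_right hmn hw2.le
          nlinarith [ih, hs, hp]
        · have heq : j' - (n + 1) = j' - n := by omega
          rw [heq]; exact ih
    have hknot : ∀ n, n < k →
        μ * t n + (g (t (j' + 1)) + δ - μ * t (j' + 1)) ≤ f (t n) := by
      intro n hn
      rcases lt_trichotomy n (j' + 1) with h | h | h
      · -- n ≤ j'
        have hm1 : j' - (j' - n) = n := by omega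
        have h1 := hdown (j' - n)
        rw [hm1] at h1
        have h2 := hle (t n) (hI_mem n hn)
        have h3 : δ ≤ (μ - θ j') * (t (j' + 1) - t j') := (min_le_right _ _).trans (min_le_right _ _)
        have h4 : t n ≤ t j' := tmono' n j' (by omega) (by omega)
        have h5 : (μ - θ j') * (t (j' + 1) - t j') ≤ (μ - θ j') * (t (j' + 1) - t n) :=
          mul_le_mul_of_nonneg_left (by linarith) hμ2.le
        linarith [h1, h2, h3, h5]
      · subst h
        have h3 : δ ≤ f (t (j' + 1)) - g (t (j' + 1)) := min_le_left _ _
        linarith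
      · -- n ≥ j' + 2
        have hm1 : j' + 1 + (n - (j' + 1)) = n := by omega
        have h1 := hup (n - (j' + 1)) (by omega)
        rw [hm1] at h1
        have h2 := hle (t n) (hI_mem n hn)
        have h3 : δ ≤ (θ (j' + 1) - μ) * (t (j' + 2) - t (j' + 1)) :=
          (min_le_right _ _).trans (min_le_left _ _)
        have h4 : t (j' + 2) ≤ t n := tmono' (j' + 2) n (by omega) hn
        have h5 : (θ (j' + 1) - μ) * (t (j' + 2) - t (j' + 1))
            ≤ (θ (j' + 1) - μ) * (t n - t (j' + 1)) :=
          mul_le_mul_of_nonneg_left (by linarith) hμ1.le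
        linarith [h1, h2, h3, h5]
    have hcontr := hbelowg μ _ hknot (t (j' + 1)) (hI_mem (j' + 1) (by omega))
    linarith
  -- final assembly
  intro ξ hξ
  have hterm : ∀ i, i + 1 < k →
      (t (i + 1) - t i) * (θ i - (f (t (i + 1)) - f (t i)) / (t (i + 1) - t i))
        = (g (t (i + 1)) - f (t (i + 1))) - (g (t i) - f (t i)) := by
    intro i hik
    have h1 := hstep i hik
    have h2 : (t (i + 1) - t i) * ((f (t (i + 1)) - f (t i)) / (t (i + 1) - t i))
        = f (t (i + 1)) - f (t i) := mul_div_cancel₀ _ (hw i hik).ne'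
    rw [mul_sub, h2]
    linarith [h1]
  have hA : 0 ≤ ∑ i ∈ Finset.range (k - 1),
      (t (i + 1) - t i) * (θ i - (f (t (i + 1)) - f (t i)) / (t (i + 1) - t i)) * (ξ i - θ i) := by
    have haux1 : ∑ i ∈ Finset.range (k - 1),
        (t (i + 1) - t i) * (θ i - (f (t (i + 1)) - f (t i)) / (t (i + 1) - t i)) * (ξ i - θ i)
        = ∑ i ∈ Finset.range (k - 1),
          ((g (t (i + 1)) - f (t (i + 1))) - (g (t i) - f (t i))) * (ξ i - θ i) := by
      refine Finset.sum_congr rfl fun i hi => ?_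
      rw [Finset.mem_range] at hi
      rw [hterm i (by omega)]
    have haux2 := abel_sum (k - 1) (fun m => g (t m) - f (t m)) (fun i => ξ i - θ i)
    simp only [he0, hek, sub_self, zero_mul, mul_zero, sub_zero, zero_sub] at haux2
    rw [haux1, haux2]
    rw [neg_nonneg]
    apply Finset.sum_nonpos
    intro j hj
    rw [Finset.mem_range] at hj
    rcases eq_or_lt_of_le (Nat.succ_le_of_lt hj) with h | h
    · have h' : j + 1 = k - 1 := by omega
      rw [h', hek, sub_self, zero_mul]
    · have hE_le : g (t (j + 1)) - f (t (j + 1)) ≤ 0 :=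
        sub_nonpos.2 (hle _ (hI_mem (j + 1) (by omega)))
      rcases eq_or_lt_of_le hE_le with hE0 | hE0
      · rw [hE0, zero_mul]
      · have hlt : g (t (j + 1)) < f (t (j + 1)) := by linarith
        have h1 := hcs j (by omega) hlt
        have h2 := hmono (j + 1) j (by omega) (by omega)
        have hθeq : θ (j + 1) = θ j := le_antisymm h1 h2
        have hξle := hξ j (j + 1) (by omega) (by omega)
        have hC : 0 ≤ (ξ (j + 1) - θ (j + 1)) - (ξ j - θ j) := by rw [hθeq]; linarith
        exact mul_nonpos_iff.2 (Or.inr ⟨hE0.le, hC⟩)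
  -- expansion of the quadratic criterion
  have hexp : ∑ i ∈ Finset.range (k - 1),
        ((t (i + 1) - t i) * (ξ i - (f (t (i + 1)) - f (t i)) / (t (i + 1) - t i)) ^ 2
          - (t (i + 1) - t i) * (θ i - (f (t (i + 1)) - f (t i)) / (t (i + 1) - t i)) ^ 2
          - 2 * ((t (i + 1) - t i) * (θ i - (f (t (i + 1)) - f (t i)) / (t (i + 1) - t i))
              * (ξ i - θ i))
          - (t (i + 1) - t i) * (ξ i - θ i) ^ 2) = 0 := by
    apply Finset.sum_eq_zero
    intro i _
    ring
  simp only [Finset.sum_sub_distrib] at hexp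
  rw [← Finset.mul_sum] at hexp
  have hB : 0 ≤ ∑ i ∈ Finset.range (k - 1), (t (i + 1) - t i) * (ξ i - θ i) ^ 2 := by
    apply Finset.sum_nonneg
    intro i hi
    rw [Finset.mem_range] at hi
    exact mul_nonneg (hw i (by omega)).le (sq_nonneg _)
  constructor
  · linarith [hexp, hA, hB]
  · intro heq i hik
    have hBzero : ∑ i ∈ Finset.range (k - 1), (t (i + 1) - t i) * (ξ i - θ i) ^ 2 = 0 := by
      linarith [hexp, hA, hB]
    have hall := (Finset.sum_eq_zero_iff_of_nonneg
      (fun i hi => by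
        rw [Finset.mem_range] at hi
        exact mul_nonneg (hw i (by omega)).le (sq_nonneg _))).mp hBzero
    have hi0 := hall i (Finset.mem_range.2 (by omega))
    have hwne : (t (i + 1) - t i) ≠ 0 := (hw i hik).ne'
    have hsq : (ξ i - θ i) ^ 2 = 0 := by
      rcases mul_eq_zero.mp hi0 with h | h
      · exact absurd h hwne
      · exact h
    have := pow_eq_zero_iff (n := 2) (by norm_num) |>.mp hsq
    linarith [this]
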